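/- Assume L ⊆ Σ^ω is recognized by some deterministic co-Büchi automaton. For every pointed pair (u,v) with v ≠ ε, and for all x,y ∈ Σ*: (u,vx) ≡_L (u,vy) if and only if (u,vx) ≈_L (u,vy). -/

import Mathlib

open Classical

/-- Rank of a transition in a co-Büchi automaton: `one` or `two`. -/
inductive Rk | one | two
deriving DecidableEq

/-- A co-Büchi automaton over alphabet `A` with state type `Q`:
initial states and a transition relation where each transition carries a rank. -/
structure CoBuchi (A : Type) (Q : Type) where
  init : Set Q
  delta : Set (Q × A × Rk × Q)

namespace CoBuchi

variable {A Q : Type}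

/-- Every state has an outgoing transition on every letter. -/
def Total (M : CoBuchi A Q) : Prop :=
  ∀ q a, ∃ r q', (q, a, r, q') ∈ M.delta

/-- The prefix `α[0..n-1]` of an infinite word. -/
def prefW (α : ℕ → A) (n : ℕ) : List A := (List.range n).map α

/-- The infinite word `a·w`. -/
def consW (a : A) (w : ℕ → A) : ℕ → A := fun n => match n with
  | 0 => a
  | Nat.succ k => w k

/-- `L(M,q)`: infinite words having a run from `q` with only finitely many rank-1
transitions. -/
def LangFrom (M : CoBuchi A Q) (q : Q) : Set (ℕ → A) :=
  { w | ∃ (ρ : ℕ → Q) (r : ℕ → Rk), ρ 0 = q ∧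
        (∀ n, (ρ n, w n, r n, ρ (n + 1)) ∈ M.delta) ∧
        ∃ N, ∀ n, N ≤ n → r n = Rk.two }

/-- `L(M)`: the language of the automaton. -/
def Lang (M : CoBuchi A Q) : Set (ℕ → A) :=
  { w | ∃ q ∈ M.init, w ∈ M.LangFrom q }

/-- `q →₂^w q'`: a finite run from `q` to `q'` on `w` using only rank-2 transitions. -/
def SafeReach (M : CoBuchi A Q) : Q → List A → Q → Prop
  | q, [], q' => q = q'
  | q, a :: w, q' => ∃ p, (q, a, Rk.two, p) ∈ M.delta ∧ SafeReach M p w q'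

/-- A finite run from `q` to `q'` on `w` using transitions of any rank. -/
def Reach (M : CoBuchi A Q) : Q → List A → Q → Prop
  | q, [], q' => q = q'
  | q, a :: w, q' => ∃ r p, (q, a, r, p) ∈ M.delta ∧ Reach M p w q'

/-- Safe language of a state. -/
def Lsf (M : CoBuchi A Q) (q : Q) : Set (List A) := { w | ∃ q', M.SafeReach q w q' }

/-- Semantically-deterministic: every transition respects residuals. -/
def SemDet (M : CoBuchi A Q) : Prop :=
  ∀ p a rk q, (p, a, rk, q) ∈ M.delta →
    M.LangFrom q = { w | consW a w ∈ M.LangFrom p }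

/-- Unsafe-saturated: all residual-respecting rank-1 transitions are present. -/
def UnsafeSat (M : CoBuchi A Q) : Prop :=
  ∀ p a q, M.LangFrom q = { w | consW a w ∈ M.LangFrom p } →
    (p, a, Rk.one, q) ∈ M.delta

/-- Safe-deterministic: at most one rank-2 transition per state and letter. -/
def SafeDet (M : CoBuchi A Q) : Prop :=
  ∀ p a q q', (p, a, Rk.two, q) ∈ M.delta → (p, a, Rk.two, q') ∈ M.delta → q = q'

/-- Normalized: every rank-2 transition can be completed to a rank-2 loop. -/
def Normalized (M : CoBuchi A Q) : Prop :=
  ∀ q a q', (q, a, Rk.two, q') ∈ M.delta → ∃ x, M.SafeReach q' x q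

/-- Deterministic: one initial state, exactly one transition per state and letter. -/
def Deterministic (M : CoBuchi A Q) : Prop :=
  (∃! q, q ∈ M.init) ∧ ∀ p a, ∃! t : Rk × Q, (p, a, t.1, t.2) ∈ M.delta

/-- History-deterministic: a strategy `σ : Σ* → Q` resolving the nondeterminism,
whose run on every `α ∈ L(M)` can be ranked with finitely many rank-1 transitions. -/
def HistoryDet (M : CoBuchi A Q) : Prop :=
  ∃ σ : List A → Q, σ [] ∈ M.init ∧
    (∀ w a, ∃ rk, (σ w, a, rk, σ (w ++ [a])) ∈ M.delta) ∧
    ∀ α ∈ M.Lang, ∃ r : ℕ → Rk,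
      (∀ n, (σ (prefW α n), α n, r n, σ (prefW α (n + 1))) ∈ M.delta) ∧
      ∃ N, ∀ n, N ≤ n → r n = Rk.two

/-- `q` and `q'` are in the same safe SCC (mutually reachable via rank-2 runs). -/
def SameSafeSCC (M : CoBuchi A Q) (q q' : Q) : Prop :=
  (∃ x, M.SafeReach q x q') ∧ (∃ y, M.SafeReach q' y q)

end CoBuchi

section LangDefs

variable {A : Type} [Nonempty A]

/-- The infinite word `u·w`. -/
def appW (u : List A) (w : ℕ → A) : ℕ → A :=
  fun n => if h : n < u.length then u.get ⟨n, h⟩ else w (n - u.length)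

/-- The infinite word `v^ω` (arbitrary if `v = ε`). -/
noncomputable def iterW (v : List A) : ℕ → A :=
  fun n =>
    if h : v = [] then Classical.arbitrary A
    else v.get ⟨n % v.length, Nat.mod_lt _ (List.length_pos_iff.mpr h)⟩

/-- The ultimately periodic word `u v^ω`. -/
noncomputable def upW (u v : List A) : ℕ → A := appW u (iterW v)

/-- The right congruence `u ∼_L v`. -/
def SimL (L : Set (ℕ → A)) (u v : List A) : Prop :=
  ∀ w : ℕ → A, appW u w ∈ L ↔ appW v w ∈ L

/-- `(u,v) ≈_L ⊥`: `v ≠ ε` and `u(vx)^ω ∉ L` for all `x` with `uvx ∼_L u`. -/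
def ApproxBot (L : Set (ℕ → A)) (u v : List A) : Prop :=
  v ≠ [] ∧ ∀ x : List A, SimL L (u ++ v ++ x) u → upW u (v ++ x) ∉ L

/-- The safe language of a pair: `sfl(u,v) = {x | (u,vx) not ≈_L ⊥}`. -/
def Sfl (L : Set (ℕ → A)) (u v : List A) : Set (List A) :=
  { x | ¬ ApproxBot L u (v ++ x) }

/-- `(u,v) ≡_L (u',v')`. -/
def EquivL (L : Set (ℕ → A)) (u v u' v' : List A) : Prop :=
  SimL L (u ++ v) (u' ++ v') ∧ Sfl L u v = Sfl L u' v'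

/-- `(u,v)` is pointed. -/
def IsPointed (L : Set (ℕ → A)) (u v : List A) : Prop :=
  ¬ ApproxBot L u v ∧
    ∀ u₁ u₂ : List A, SimL L (u₁ ++ u₂) u → ¬ ApproxBot L u₁ (u₂ ++ v) →
      Sfl L u v = Sfl L u₁ (u₂ ++ v)

/-- `(u,v) ≈_L (u',v')` (for pairs with nonempty second components). -/
def ApproxL (L : Set (ℕ → A)) (u v u' v' : List A) : Prop :=
  SimL L u u' ∧ SimL L (u ++ v) (u' ++ v') ∧
    ∀ x : List A, SimL L (u ++ v ++ x) u →
      (upW u (v ++ x) ∈ L ↔ upW u' (v' ++ x) ∈ L)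

/-- `L` is recognized by some (total) deterministic co-Büchi automaton. -/
def DCWRecognizable (L : Set (ℕ → A)) : Prop :=
  ∃ (Q : Type) (_ : Fintype Q) (M : CoBuchi A Q), M.Deterministic ∧ M.Lang = L

/-- IsPointed pairs. -/
def PointedPair (L : Set (ℕ → A)) : Type :=
  { p : List A × List A // IsPointed L p.1 p.2 }

/-- `≡_L` as a setoid on all pairs. -/
def equivLSetoid (L : Set (ℕ → A)) : Setoid (List A × List A) where
  r p q := EquivL L p.1 p.2 q.1 q.2
  iseqv := {
    refl := fun p => ⟨fun w => Iff.rfl, rfl⟩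
    symm := fun h => ⟨fun w => (h.1 w).symm, h.2.symm⟩
    trans := fun h g => ⟨fun w => (h.1 w).trans (g.1 w), h.2.trans g.2⟩ }

/-- `≡_L` as a setoid on pointed pairs. -/
def canonSetoid (L : Set (ℕ → A)) : Setoid (PointedPair L) where
  r p q := EquivL L p.1.1 p.1.2 q.1.1 q.1.2
  iseqv := {
    refl := fun p => ⟨fun w => Iff.rfl, rfl⟩
    symm := fun h => ⟨fun w => (h.1 w).symm, h.2.symm⟩
    trans := fun h g => ⟨fun w => (h.1 w).trans (g.1 w), h.2.trans g.2⟩ }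

/-- States of the canonical automaton: `≡_L`-classes of pointed pairs. -/
def CanonState (L : Set (ℕ → A)) : Type := Quotient (canonSetoid L)

/-- The class `⟦u,v⟧` of a pointed pair. -/
def cls (L : Set (ℕ → A)) (u v : List A) (h : IsPointed L u v) : CanonState L :=
  Quotient.mk (canonSetoid L) ⟨(u, v), h⟩

/-- The canonical automaton `A_{≡_L}`. -/
def canonAut (L : Set (ℕ → A)) : CoBuchi A (CanonState L) where
  init := { s | ∃ (u v : List A) (h : IsPointed L u v),
              s = cls L u v h ∧ SimL L (u ++ v) [] }
  delta := { t |
    (∃ (u v : List A) (h : IsPointed L u v) (h' : IsPointed L u (v ++ [t.2.1])),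
        ¬ ApproxBot L u (v ++ [t.2.1]) ∧
        t.1 = cls L u v h ∧ t.2.2.1 = Rk.two ∧
        t.2.2.2 = cls L u (v ++ [t.2.1]) h') ∨
    (∃ (u v u' v' : List A) (h : IsPointed L u v) (h' : IsPointed L u' v'),
        SimL L (u ++ v ++ [t.2.1]) (u' ++ v') ∧
        t.1 = cls L u v h ∧ t.2.2.1 = Rk.one ∧ t.2.2.2 = cls L u' v' h') }

/-- `θ(u,v)`: states of `A_{≡_L}` reachable by reading `u` from an initial state
(any ranks) and then `v` via rank-2 transitions only. -/
def theta (L : Set (ℕ → A)) (u v : List A) : Set (CanonState L) :=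
  { q | ∃ p₀ ∈ (canonAut L).init, ∃ p,
          (canonAut L).Reach p₀ u p ∧ (canonAut L).SafeReach p v q }

/-- `(u,v)` is supported: `θ(u,v) ≠ ∅`. -/
def Supported (L : Set (ℕ → A)) (u v : List A) : Prop := (theta L u v).Nonempty

/-- `(u,v)` is double-supported: two distinct states of `θ(u,v)` in the same safe SCC. -/
def DoubleSupported (L : Set (ℕ → A)) (u v : List A) : Prop :=
  ∃ q ∈ theta L u v, ∃ q' ∈ theta L u v, q ≠ q' ∧ (canonAut L).SameSafeSCC q q'

/-- `(u,v)` is single-supported. -/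
def SingleSupported (L : Set (ℕ → A)) (u v : List A) : Prop :=
  Supported L u v ∧ ¬ DoubleSupported L u v

/-- `w` concatenated with itself `m` times. -/
def repCat (w : List A) : ℕ → List A
  | 0 => []
  | Nat.succ m => w ++ repCat w m

end LangDefs
set_option linter.unusedVariables false
set_option linter.unusedSectionVars false
section Kit
variable {A : Type} [Nonempty A]

lemma simL_refl (L : Set (ℕ → A)) (u : List A) : SimL L u u := fun _ => Iff.rfl

lemma simL_symm {L : Set (ℕ → A)} {u v : List A} (h : SimL L u v) : SimL L v u :=
  fun w => (h w).symm

lemma simL_trans {L : Set (ℕ → A)} {u v w : List A} (h1 : SimL L u v) (h2 : SimL L v w) :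
    SimL L u w := fun α => (h1 α).trans (h2 α)

lemma appW_lt (u : List A) (w : ℕ → A) {n : ℕ} (h : n < u.length) : appW u w n = u[n] := by
  simp [appW, h]

lemma appW_add (u : List A) (w : ℕ → A) (p : ℕ) : appW u w (u.length + p) = w p := by
  have : ¬ (u.length + p < u.length) := by omega
  simp [appW, this]

lemma appW_append (u v : List A) (w : ℕ → A) : appW (u ++ v) w = appW u (appW v w) := by
  funext n
  unfold appW
  rcases lt_or_ge n u.length with h | h
  · have h2 : n < (u ++ v).length := by simp; omega
    simp only [dif_pos h, dif_pos h2]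
    rw [List.get_eq_getElem, List.get_eq_getElem, List.getElem_append_left]
  · rcases lt_or_ge n (u.length + v.length) with h3 | h3
    · have h2 : n < (u ++ v).length := by simp; omega
      have h4 : n - u.length < v.length := by omega
      simp only [dif_pos h2, dif_neg (not_lt.mpr h), dif_pos h4, List.get_eq_getElem]
      exact List.getElem_append_right h
    · have h2 : ¬ (n < (u ++ v).length) := by simp; omega
      have h4 : ¬ (n - u.length < v.length) := by omega
      simp only [dif_neg h2, dif_neg (not_lt.mpr h), dif_neg h4]
      congr 1
      simp
      omega

lemma simL_append {L : Set (ℕ → A)} {s t : List A} (h : SimL L s t) (r : List A) :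
    SimL L (s ++ r) (t ++ r) := by
  intro w
  rw [appW_append, appW_append]
  exact h _

end Kit
set_option linter.unusedSectionVars false
section Kit2
variable {A : Type} [Nonempty A]

lemma iterW_small (w : List A) {n : ℕ} (h : n < w.length) : iterW w n = w[n] := by
  have hne : w ≠ [] := by rintro rfl; simp at h
  simp only [iterW, dif_neg hne, List.get_eq_getElem]
  congr 1
  exact Nat.mod_eq_of_lt h

lemma iterW_add (w : List A) (n : ℕ) : iterW w (w.length + n) = iterW w n := by
  by_cases hne : w = []
  · simp [iterW, hne]
  · simp only [iterW, dif_neg hne, List.get_eq_getElem]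
    congr 1
    exact Nat.add_mod_left _ _

lemma iterW_mul_add (w : List A) (k n : ℕ) : iterW w (k * w.length + n) = iterW w n := by
  induction k with
  | zero => simp
  | succ m ih =>
    have : (m + 1) * w.length + n = w.length + (m * w.length + n) := by ring
    rw [this, iterW_add, ih]

lemma iterW_append_self (w : List A) : iterW (w ++ w) = iterW w := by
  funext n
  by_cases hne : w = []
  · simp [iterW, hne]
  · have hne2 : w ++ w ≠ [] := by simp [hne]
    have hl : 0 < w.length := List.length_pos_iff.mpr hne
    simp only [iterW, dif_neg hne, dif_neg hne2, List.get_eq_getElem]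
    have hlen : (w ++ w).length = w.length + w.length := by simp
    have hmm : (n % (w ++ w).length) % w.length = n % w.length := by
      rw [hlen]
      have : w.length ∣ w.length + w.length := ⟨2, by ring⟩
      exact Nat.mod_mod_of_dvd n this
    rcases lt_or_ge (n % (w ++ w).length) w.length with h | h
    · rw [List.getElem_append_left h]
      congr 1
      rw [← hmm, Nat.mod_eq_of_lt h]
    · rw [List.getElem_append_right h]
      congr 1
      have hlt : n % (w ++ w).length < w.length + w.length := by
        rw [← hlen]; exact Nat.mod_lt _ (by rw [hlen]; omega)
      have key : (n % (w ++ w).length) % w.length = n % (w ++ w).length - w.length := by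
        rw [Nat.mod_eq_sub_mod h, Nat.mod_eq_of_lt (by omega)]
      rw [← hmm, key]

lemma upW_append_self (u w : List A) : upW u (w ++ w) = upW u w := by
  unfold upW
  rw [iterW_append_self]

lemma repCat_length (w : List A) (k : ℕ) : (repCat w k).length = k * w.length := by
  induction k with
  | zero => simp [repCat]
  | succ m ih => simp [repCat, ih]; ring

lemma repCat_append_self (w : List A) (k : ℕ) :
    repCat w k ++ w = w ++ repCat w k := by
  induction k with
  | zero => simp [repCat]
  | succ m ih =>
    show (w ++ repCat w m) ++ w = w ++ (w ++ repCat w m)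
    rw [List.append_assoc, ih]

lemma repCat_succ' (w : List A) (k : ℕ) : repCat w (k + 1) = repCat w k ++ w := by
  rw [repCat_append_self]; rfl

lemma repCat_ne_nil {w : List A} (hw : w ≠ []) (k : ℕ) : repCat w (k + 1) ≠ [] := by
  show w ++ repCat w k ≠ []
  cases w with
  | nil => exact absurd rfl hw
  | cons a t => simp

lemma repCat_take (w : List A) {i k : ℕ} (h : i ≤ k) :
    (repCat w k).take (i * w.length) = repCat w i := by
  induction i generalizing k with
  | zero => simp [repCat]
  | succ m ih =>
    cases k with
    | zero => omega
    | succ k' =>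
      show (w ++ repCat w k').take ((m+1) * w.length) = w ++ repCat w m
      have harith : (m + 1) * w.length = w.length + m * w.length := by ring
      rw [harith, List.take_append]
      have h1 : (w.length + m * w.length) - w.length = m * w.length := by omega
      have h2 : w.take (w.length + m * w.length) = w := List.take_of_length_le (by omega)
      rw [h1, h2, ih (by omega)]

end Kit2
set_option linter.unusedSectionVars false
section Kit3
open CoBuchi
variable {A : Type} [Nonempty A]

lemma prefW_length (α : ℕ → A) (n : ℕ) : (prefW α n).length = n := by
  simp [prefW]

lemma prefW_getElem (α : ℕ → A) (n i : ℕ) (h : i < (prefW α n).length) :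
    (prefW α n)[i] = α i := by
  simp [prefW]

lemma prefW_appW (u : List A) (w : ℕ → A) (k : ℕ) :
    prefW (appW u w) (u.length + k) = u ++ prefW w k := by
  apply List.ext_getElem
  · simp [prefW_length]
  · intro i h1 h2
    rw [prefW_getElem]
    rcases lt_or_ge i u.length with h | h
    · rw [List.getElem_append_left h, appW_lt u w h]
    · have hi : i = u.length + (i - u.length) := by omega
      rw [List.getElem_append_right h]
      conv_lhs => rw [hi, appW_add]
      rw [prefW_getElem]

lemma prefW_iterW_block (γ : List A) (k : ℕ) :
    prefW (iterW γ) (γ.length + k) = γ ++ prefW (iterW γ) k := by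
  apply List.ext_getElem
  · simp [prefW_length]
  · intro i h1 h2
    rw [prefW_getElem]
    rcases lt_or_ge i γ.length with h | h
    · rw [List.getElem_append_left h, iterW_small γ h]
    · have hi : i = γ.length + (i - γ.length) := by omega
      rw [List.getElem_append_right h]
      conv_lhs => rw [hi, iterW_add]
      rw [prefW_getElem]

lemma prefW_iterW_mul (γ : List A) (k r : ℕ) :
    prefW (iterW γ) (k * γ.length + r) = repCat γ k ++ prefW (iterW γ) r := by
  induction k with
  | zero => simp [repCat]
  | succ m ih =>
    have harith : (m + 1) * γ.length + r = γ.length + (m * γ.length + r) := by ring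
    rw [harith, prefW_iterW_block, ih]
    show γ ++ (repCat γ m ++ _) = (γ ++ repCat γ m) ++ _
    rw [List.append_assoc]

lemma prefW_iterW_small (γ : List A) {r : ℕ} (h : r ≤ γ.length) :
    prefW (iterW γ) r = γ.take r := by
  apply List.ext_getElem
  · simp [prefW_length, Nat.min_eq_left h]
  · intro i h1 h2
    rw [prefW_length] at h1
    rw [prefW_getElem, List.getElem_take, iterW_small γ (by omega)]

lemma simL_repCat {L : Set (ℕ → A)} {u g : List A} (h : SimL L (u ++ g) u) (k : ℕ) :
    SimL L (u ++ repCat g k) u := by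
  induction k with
  | zero => simpa [repCat] using simL_refl L u
  | succ m ih =>
    have h1 : SimL L ((u ++ g) ++ repCat g m) (u ++ repCat g m) := simL_append h _
    rw [List.append_assoc] at h1
    exact simL_trans h1 ih

lemma append_ne_nil_left {v : List A} (hv : v ≠ []) (r : List A) : v ++ r ≠ [] := by
  cases v with
  | nil => exact absurd rfl hv
  | cons a t => simp

lemma notBot_iff (L : Set (ℕ → A)) (u c : List A) (hc : c ≠ []) :
    ¬ ApproxBot L u c ↔ ∃ x, SimL L (u ++ c ++ x) u ∧ upW u (c ++ x) ∈ L := by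
  unfold ApproxBot
  push_neg
  constructor
  · intro h
    rcases h hc with ⟨x, hx1, hx2⟩
    exact ⟨x, hx1, hx2⟩
  · intro ⟨x, hx1, hx2⟩ _
    exact ⟨x, hx1, hx2⟩

lemma mem_sfl_iff (L : Set (ℕ → A)) (u c s : List A) :
    s ∈ Sfl L u c ↔ ¬ ApproxBot L u (c ++ s) := Iff.rfl

lemma sfl_deriv {L : Set (ℕ → A)} {u c c' : List A} (h : Sfl L u c = Sfl L u c')
    (W : List A) : Sfl L u (c ++ W) = Sfl L u (c' ++ W) := by
  ext s
  rw [mem_sfl_iff, mem_sfl_iff, List.append_assoc, List.append_assoc]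
  rw [show (¬ ApproxBot L u (c ++ (W ++ s))) = (W ++ s ∈ Sfl L u c) from rfl]
  rw [show (¬ ApproxBot L u (c' ++ (W ++ s))) = (W ++ s ∈ Sfl L u c') from rfl]
  rw [h]

lemma bot_transfer {L : Set (ℕ → A)} {u c c' : List A} (h : Sfl L u c = Sfl L u c') :
    ¬ ApproxBot L u c ↔ ¬ ApproxBot L u c' := by
  have := Set.ext_iff.mp h []
  rw [mem_sfl_iff, mem_sfl_iff, List.append_nil, List.append_nil] at this
  exact this

end Kit3
set_option linter.unusedSectionVars false
section Kit4
open CoBuchi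

variable {A Q : Type}

noncomputable def dstep (M : CoBuchi A Q) (hdet : M.Deterministic) (q : Q) (a : A) : Rk × Q :=
  (hdet.2 q a).exists.choose

lemma dstep_mem (M : CoBuchi A Q) (hdet : M.Deterministic) (q : Q) (a : A) :
    (q, a, (dstep M hdet q a).1, (dstep M hdet q a).2) ∈ M.delta :=
  (hdet.2 q a).exists.choose_spec

lemma dstep_unique (M : CoBuchi A Q) (hdet : M.Deterministic) {q : Q} {a : A} {r : Rk} {q' : Q}
    (h : (q, a, r, q') ∈ M.delta) : (r, q') = dstep M hdet q a := by
  rcases hdet.2 q a with ⟨t, ht, huniq⟩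
  have h1 := huniq (r, q') h
  have h2 := huniq (dstep M hdet q a) (dstep_mem M hdet q a)
  rw [h1, h2]

noncomputable def q0D (M : CoBuchi A Q) (hdet : M.Deterministic) : Q :=
  hdet.1.exists.choose

lemma q0D_mem (M : CoBuchi A Q) (hdet : M.Deterministic) : q0D M hdet ∈ M.init :=
  hdet.1.exists.choose_spec

noncomputable def runD (M : CoBuchi A Q) (hdet : M.Deterministic) (q : Q) (w : ℕ → A) : ℕ → Q
  | 0 => q
  | n + 1 => (dstep M hdet (runD M hdet q w n) (w n)).2

noncomputable def rkD (M : CoBuchi A Q) (hdet : M.Deterministic) (q : Q) (w : ℕ → A) (n : ℕ) : Rk :=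
  (dstep M hdet (runD M hdet q w n) (w n)).1

lemma mem_lang_iff (M : CoBuchi A Q) (hdet : M.Deterministic) (w : ℕ → A) :
    w ∈ M.Lang ↔ ∃ N, ∀ n, N ≤ n → rkD M hdet (q0D M hdet) w n = Rk.two := by
  constructor
  · rintro ⟨q, hq, ρ, r, h0, htrans, N, hN⟩
    have hq0 : q = q0D M hdet := by
      rcases hdet.1 with ⟨qi, hqi, huniq⟩
      rw [huniq q hq, huniq (q0D M hdet) (q0D_mem M hdet)]
    have key : ∀ n, ρ n = runD M hdet (q0D M hdet) w n ∧
        r n = rkD M hdet (q0D M hdet) w n := by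
      intro n
      induction n with
      | zero =>
        constructor
        · rw [h0, hq0]; rfl
        · have := dstep_unique M hdet (htrans 0)
          rw [show ρ 0 = runD M hdet (q0D M hdet) w 0 from by rw [h0, hq0]; rfl] at this
          unfold rkD
          rw [← this]
      | succ m ih =>
        have htr := htrans m
        rw [ih.1] at htr
        have h1 := dstep_unique M hdet htr
        constructor
        · show ρ (m+1) = (dstep M hdet (runD M hdet (q0D M hdet) w m) (w m)).2
          rw [← h1]
        · have htr2 := htrans (m+1)
          have hs : ρ (m+1) = runD M hdet (q0D M hdet) w (m+1) := by
            show ρ (m+1) = (dstep M hdet (runD M hdet (q0D M hdet) w m) (w m)).2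
            rw [← h1]
          rw [hs] at htr2
          have h2 := dstep_unique M hdet htr2
          unfold rkD
          rw [← h2]
    exact ⟨N, fun n hn => by rw [← (key n).2]; exact hN n hn⟩
  · rintro ⟨N, hN⟩
    refine ⟨q0D M hdet, q0D_mem M hdet, runD M hdet (q0D M hdet) w,
      rkD M hdet (q0D M hdet) w, rfl, fun n => dstep_mem M hdet _ _, N, hN⟩

lemma runD_add (M : CoBuchi A Q) (hdet : M.Deterministic) (q : Q) (w : ℕ → A) (k j : ℕ) :
    runD M hdet q w (k + j) = runD M hdet (runD M hdet q w k) (fun i => w (k + i)) j := by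
  induction j with
  | zero => rfl
  | succ m ih =>
    show runD M hdet q w ((k + m) + 1) = _
    show (dstep M hdet (runD M hdet q w (k+m)) (w (k+m))).2 = _
    rw [ih]
    rfl

lemma rkD_add (M : CoBuchi A Q) (hdet : M.Deterministic) (q : Q) (w : ℕ → A) (k j : ℕ) :
    rkD M hdet q w (k + j) = rkD M hdet (runD M hdet q w k) (fun i => w (k + i)) j := by
  unfold rkD
  rw [runD_add]

lemma runD_congr (M : CoBuchi A Q) (hdet : M.Deterministic) (q : Q) {w w' : ℕ → A} (n : ℕ)
    (h : ∀ i, i < n → w i = w' i) : runD M hdet q w n = runD M hdet q w' n := by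
  induction n with
  | zero => rfl
  | succ m ih =>
    show (dstep M hdet (runD M hdet q w m) (w m)).2 = (dstep M hdet (runD M hdet q w' m) (w' m)).2
    rw [ih (fun i hi => h i (by omega)), h m (by omega)]

lemma rkD_congr (M : CoBuchi A Q) (hdet : M.Deterministic) (q : Q) {w w' : ℕ → A} (n : ℕ)
    (h : ∀ i, i ≤ n → w i = w' i) : rkD M hdet q w n = rkD M hdet q w' n := by
  unfold rkD
  rw [runD_congr M hdet q n (fun i hi => h i (by omega)), h n (by omega)]

lemma shift_periodic (ω : ℕ → A) (D : ℕ) (hper : ∀ p, ω (D + p) = ω p) (m : ℕ) :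
    (fun i => ω (D * m + i)) = ω := by
  induction m with
  | zero => simp
  | succ k ih =>
    funext i
    have : D * (k + 1) + i = D * k + (D + i) := by ring
    rw [this]
    have := congrFun ih (D + i)
    rw [this, hper]

lemma accept_of_safe_cycle [Nonempty A] (M : CoBuchi A Q) (hdet : M.Deterministic)
    (t : List A) (ω : ℕ → A) (D : ℕ) (hD : 0 < D)
    (hper : ∀ p, ω (D + p) = ω p)
    (s : Q) (hs : runD M hdet (q0D M hdet) (appW t ω) t.length = s)
    (hret : runD M hdet s ω D = s)
    (hsafe : ∀ p, p < D → rkD M hdet s ω p = Rk.two) :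
    appW t ω ∈ M.Lang := by
  rw [mem_lang_iff M hdet]
  refine ⟨t.length, fun n hn => ?_⟩
  obtain ⟨p, rfl⟩ : ∃ p, n = t.length + p := ⟨n - t.length, by omega⟩
  rw [rkD_add, hs]
  have hω : (fun i => appW t ω (t.length + i)) = ω := by
    funext i; exact appW_add t ω i
  rw [hω]
  -- now show all ranks of the ω-run from s are two
  have hcyc : ∀ m, runD M hdet s ω (D * m) = s := by
    intro m
    induction m with
    | zero => rfl
    | succ k ih =>
      have : D * (k + 1) = D * k + D := by ring
      rw [this, runD_add, ih, shift_periodic ω D hper, hret]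
  have hp : p = D * (p / D) + p % D := by
    rw [Nat.div_add_mod]
  rw [hp, rkD_add, hcyc, shift_periodic ω D hper]
  exact hsafe _ (Nat.mod_lt _ hD)

end Kit4
set_option linter.unusedSectionVars false
section Kit5
open CoBuchi
variable {A : Type} [Nonempty A]

lemma repCat_getElem_iterW (w : List A) (k : ℕ) :
    ∀ (i : ℕ) (h : i < (repCat w k).length), (repCat w k)[i] = iterW w i := by
  induction k with
  | zero => intro i h; rw [repCat_length] at h; omega
  | succ m ih =>
    intro i h
    have hl2 : i < (w ++ repCat w m).length := h
    show (w ++ repCat w m)[i]'hl2 = iterW w i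
    rcases lt_or_ge i w.length with hlt | hge
    · rw [List.getElem_append_left hlt, iterW_small w hlt]
    · have hlen : (repCat w (m+1)).length = w.length + (repCat w m).length := by
        show (w ++ repCat w m).length = _
        simp
      have h2 : i - w.length < (repCat w m).length := by
        rw [hlen] at h; omega
      rw [List.getElem_append_right hge, ih _ h2]
      conv_rhs => rw [show i = w.length + (i - w.length) from by omega, iterW_add]

lemma pump (L : Set (ℕ → A)) (hrec : DCWRecognizable L)
    (u e : List A) (he : e ≠ [])
    (hres : SimL L (u ++ e) u)
    (H : ∀ m : ℕ, ∃ χ, SimL L (u ++ (repCat e (m+1) ++ χ)) u ∧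
        upW u (repCat e (m+1) ++ χ) ∈ L) :
    upW u e ∈ L := by
  obtain ⟨Q, fQ, M, hdet, hlang⟩ := hrec
  haveI : Fintype Q := fQ
  set n := Fintype.card Q with hn
  obtain ⟨χ, hsim, hmem⟩ := H n
  set γ : List A := repCat e (n+1) ++ χ with hγ
  have hLe : 0 < e.length := List.length_pos_iff.mpr he
  have hγrep : (n+1) * e.length ≤ γ.length := by
    rw [hγ]
    simp [repCat_length]
  have hγpos : 0 < γ.length := by
    have : 0 < (n+1) * e.length := by positivity
    omega
  set W : ℕ → A := appW u (iterW γ) with hW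
  have hmemW : W ∈ M.Lang := by
    rw [hlang]
    exact hmem
  obtain ⟨N, hN⟩ := (mem_lang_iff M hdet W).1 hmemW
  set base : ℕ := u.length + N * γ.length with hbase
  have hbaseN : N ≤ base := by
    have : N * 1 ≤ N * γ.length := Nat.mul_le_mul_left N hγpos
    omega
  -- letters of W in the e-blocks region
  have hlet : ∀ r, r < (n+1) * e.length → W (base + r) = iterW e r := by
    intro r hr
    have h1 : base + r = u.length + (N * γ.length + r) := by omega
    rw [hW, h1, appW_add, iterW_mul_add]
    have hrγ : r < γ.length := lt_of_lt_of_le hr hγrep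
    rw [iterW_small γ hrγ]
    have hrrep : r < (repCat e (n+1)).length := by rw [repCat_length]; exact hr
    rw [List.getElem_of_eq hγ hrγ, List.getElem_append_left hrrep]
    exact repCat_getElem_iterW e (n+1) r hrrep
  -- pigeonhole
  have hcard : Fintype.card Q < Fintype.card (Fin (n+1)) := by simp [hn]
  obtain ⟨i, j, hij, hfeq⟩ := Fintype.exists_ne_map_eq_of_card_lt
    (fun i : Fin (n+1) => runD M hdet (q0D M hdet) W (base + i.val * e.length)) hcard
  -- order them
  obtain ⟨a, b, hab, hbn, heq⟩ : ∃ a b : ℕ, a < b ∧ b ≤ n ∧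
      runD M hdet (q0D M hdet) W (base + a * e.length) =
      runD M hdet (q0D M hdet) W (base + b * e.length) := by
    rcases lt_trichotomy i.val j.val with h | h | h
    · exact ⟨i.val, j.val, h, by omega, hfeq⟩
    · exact absurd (Fin.ext h) hij
    · exact ⟨j.val, i.val, h, by omega, hfeq.symm⟩
  set s : Q := runD M hdet (q0D M hdet) W (base + a * e.length) with hs
  set D : ℕ := (b - a) * e.length with hD
  have hDpos : 0 < D := by
    rw [hD]
    have : 0 < b - a := by omega
    positivity
  have habD : a * e.length + D = b * e.length := by
    rw [hD, Nat.sub_mul]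
    have : a * e.length ≤ b * e.length := Nat.mul_le_mul_right _ (le_of_lt hab)
    omega
  have hDbound : a * e.length + D ≤ n * e.length := by
    rw [habD]
    exact Nat.mul_le_mul_right _ hbn
  have hnlt : n * e.length < (n+1) * e.length := by
    have : (n+1) * e.length = n * e.length + e.length := by ring
    omega
  -- local word agreement
  have hagree : ∀ p, p < D → W (base + a * e.length + p) = iterW e p := by
    intro p hp
    have h1 : base + a * e.length + p = base + (a * e.length + p) := by omega
    rw [h1, hlet _ (by omega)]
    exact iterW_mul_add e a p
  have hret : runD M hdet s (iterW e) D = s := by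
    have h1 : runD M hdet s (fun p => W (base + a * e.length + p)) D =
        runD M hdet (q0D M hdet) W (base + a * e.length + D) := by
      rw [runD_add]
    have h2 : base + a * e.length + D = base + b * e.length := by omega
    rw [runD_congr M hdet s D (fun i hi => (hagree i hi).symm), h1, h2, ← heq]
  have hsafe : ∀ p, p < D → rkD M hdet s (iterW e) p = Rk.two := by
    intro p hp
    rw [rkD_congr M hdet s p (fun i hi => ((hagree i (by omega)).symm))]
    rw [show rkD M hdet s (fun p => W (base + a * e.length + p)) p
        = rkD M hdet (q0D M hdet) W (base + a * e.length + p) from by rw [rkD_add]]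
    exact hN _ (by omega)
  have hper : ∀ p, iterW e (D + p) = iterW e p := by
    intro p
    rw [hD]
    exact iterW_mul_add e (b-a) p
  set t : List A := prefW W (base + a * e.length) with ht
  have htlen : t.length = base + a * e.length := by rw [ht, prefW_length]
  have hagree0 : ∀ i, i < base + a * e.length → appW t (iterW e) i = W i := by
    intro i hi
    have hit : i < t.length := by omega
    rw [appW_lt t _ hit, List.getElem_of_eq ht hit, prefW_getElem]
  have hsrun : runD M hdet (q0D M hdet) (appW t (iterW e)) t.length = s := by
    rw [htlen, runD_congr M hdet (q0D M hdet) (base + a * e.length) hagree0]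
  have hacc : appW t (iterW e) ∈ M.Lang :=
    accept_of_safe_cycle M hdet t (iterW e) D hDpos hper s hsrun hret hsafe
  -- the list structure of t
  have hteq : t = (u ++ repCat γ N) ++ repCat e a := by
    rw [ht, hW, hbase]
    rw [show u.length + N * γ.length + a * e.length
        = u.length + (N * γ.length + a * e.length) from by omega]
    rw [prefW_appW, prefW_iterW_mul]
    have h1 : prefW (iterW γ) (a * e.length) = γ.take (a * e.length) := by
      apply prefW_iterW_small
      calc a * e.length ≤ n * e.length := Nat.mul_le_mul_right _ (by omega)
        _ ≤ (n+1) * e.length := by omega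
        _ ≤ γ.length := hγrep
    rw [h1]
    have h2 : γ.take (a * e.length) = repCat e a := by
      rw [hγ, List.take_append_of_le_length
        (by rw [repCat_length]; calc a * e.length ≤ n * e.length := Nat.mul_le_mul_right _ (by omega)
              _ ≤ (n+1) * e.length := by omega)]
      exact repCat_take e (by omega)
    rw [h2, List.append_assoc]
  have hsimt : SimL L t u := by
    rw [hteq]
    have h1 : SimL L (u ++ repCat γ N) u := simL_repCat hsim N
    have h2 : SimL L (u ++ repCat e a) u := simL_repCat hres a
    exact simL_trans (simL_append h1 (repCat e a)) h2
  have := (hsimt (iterW e)).1 (by rw [← hlang]; exact hacc)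
  exact this

end Kit5
set_option linter.unusedSectionVars false
section Kit6
variable {A : Type} [Nonempty A]

lemma notBot_of_witness (L : Set (ℕ → A)) (u c w : List A) (hc : c ≠ [])
    (h1 : SimL L (u ++ (c ++ w)) u) (h2 : upW u (c ++ w) ∈ L) :
    ¬ ApproxBot L u c := by
  rw [notBot_iff L u c hc]
  refine ⟨w, ?_, h2⟩
  rw [List.append_assoc]
  exact h1

lemma core (L : Set (ℕ → A)) (hrec : DCWRecognizable L)
    (u v x y z : List A) (hv : v ≠ []) (hpt : IsPointed L u v)
    (hR : SimL L (u ++ (v ++ x)) (u ++ (v ++ y)))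
    (hS : Sfl L u (v ++ x) = Sfl L u (v ++ y))
    (hz : SimL L (u ++ (v ++ x) ++ z) u)
    (hM : upW u ((v ++ x) ++ z) ∈ L) :
    upW u ((v ++ y) ++ z) ∈ L := by
  simp only [List.append_assoc] at hz hM ⊢
  -- now hz : SimL L (u ++ (v ++ (x ++ z))) u, hM : upW u (v ++ (x ++ z)) ∈ L
  -- goal : upW u (v ++ (y ++ z)) ∈ L
  have hXne : v ++ (x ++ z) ≠ [] := append_ne_nil_left hv _
  have hEne : v ++ (y ++ z) ≠ [] := append_ne_nil_left hv _
  have hBzres : SimL L (u ++ (v ++ (y ++ z))) u := by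
    have h1 := simL_append hR z
    simp only [List.append_assoc] at h1
    exact simL_trans (simL_symm h1) hz
  -- z ∈ Sfl(u, v++x), transfer to Sfl(u, v++y)
  have hAz : ¬ ApproxBot L u (v ++ (x ++ z)) := by
    refine notBot_of_witness L u _ [] hXne ?_ ?_
    · simpa using hz
    · simpa using hM
  have hBz : ¬ ApproxBot L u (v ++ (y ++ z)) := by
    have hAz' : ¬ ApproxBot L u ((v ++ x) ++ z) := by
      rw [List.append_assoc]; exact hAz
    have h1 : z ∈ Sfl L u (v ++ x) := hAz'
    rw [hS] at h1
    have h2 : ¬ ApproxBot L u ((v ++ y) ++ z) := h1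
    rw [List.append_assoc] at h2
    exact h2
  -- step 1 : (u, vx (z v)) is not bot, witnessed inside (v x z)^ω
  have hAzv : ¬ ApproxBot L u (v ++ (x ++ (z ++ v))) := by
    have ekey : (v ++ (x ++ (z ++ v))) ++ (x ++ z)
        = (v ++ (x ++ z)) ++ (v ++ (x ++ z)) := by
      simp [List.append_assoc]
    refine notBot_of_witness L u _ (x ++ z) (append_ne_nil_left hv _) ?_ ?_
    · rw [show (v ++ (x ++ (z ++ v))) ++ (x ++ z) = (v ++ (x ++ z)) ++ (v ++ (x ++ z))
        from ekey]
      have h2 := simL_append hz (v ++ (x ++ z))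
      rw [List.append_assoc] at h2
      exact simL_trans h2 hz
    · rw [ekey, upW_append_self]
      exact hM
  have hBzv : ¬ ApproxBot L u (v ++ (y ++ (z ++ v))) := by
    have hAzv' : ¬ ApproxBot L u ((v ++ x) ++ (z ++ v)) := by
      rw [List.append_assoc]; exact hAzv
    have h1 : (z ++ v) ∈ Sfl L u (v ++ x) := hAzv'
    rw [hS] at h1
    have h2 : ¬ ApproxBot L u ((v ++ y) ++ (z ++ v)) := h1
    rw [List.append_assoc] at h2
    exact h2
  -- the ladder
  have P : ∀ m, ¬ ApproxBot L u (repCat (v ++ (y ++ z)) m ++ v) := by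
    intro m
    induction m with
    | zero => simpa [repCat] using hpt.1
    | succ k ih =>
      have hsfl := hpt.2 u (repCat (v ++ (y ++ z)) k) (simL_repCat hBzres k) ih
      have hder := sfl_deriv hsfl (y ++ (z ++ v))
      have step := (bot_transfer hder).1 hBzv
      have e2 : (repCat (v ++ (y ++ z)) k ++ v) ++ (y ++ (z ++ v))
          = repCat (v ++ (y ++ z)) (k + 1) ++ v := by
        rw [repCat_succ']
        simp [List.append_assoc]
      rw [e2] at step
      exact step
  -- the pumping witnesses
  have H : ∀ m, ∃ χ, SimL L (u ++ (repCat (v ++ (y ++ z)) (m+1) ++ χ)) u ∧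
      upW u (repCat (v ++ (y ++ z)) (m+1) ++ χ) ∈ L := by
    intro m
    have hsfl := hpt.2 u (repCat (v ++ (y ++ z)) m) (simL_repCat hBzres m) (P m)
    have hder := sfl_deriv hsfl (y ++ z)
    have step := (bot_transfer hder).1 hBz
    have e2 : (repCat (v ++ (y ++ z)) m ++ v) ++ (y ++ z)
        = repCat (v ++ (y ++ z)) (m + 1) := by
      rw [repCat_succ']
      simp [List.append_assoc]
    rw [e2] at step
    rw [notBot_iff L u _ (repCat_ne_nil hEne m)] at step
    obtain ⟨χ, h1, h2⟩ := step
    rw [List.append_assoc] at h1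
    exact ⟨χ, h1, h2⟩
  exact pump L hrec u (v ++ (y ++ z)) hEne hBzres H

end Kit6
set_option linter.unusedSectionVars false

theorem stmt14' {A : Type} [Nonempty A] (L : Set (ℕ → A))
    (hrec : DCWRecognizable L)
    (u v : List A) (h : IsPointed L u v) (hv : v ≠ []) (x y : List A) :
    EquivL L u (v ++ x) u (v ++ y) ↔ ApproxL L u (v ++ x) u (v ++ y) := by
  constructor
  · rintro ⟨hR, hS⟩
    refine ⟨simL_refl L u, hR, fun z hz => ?_⟩
    constructor
    · intro hM
      exact core L hrec u v x y z hv h hR hS hz hM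
    · intro hM
      have ha := simL_append hR z
      have hz' : SimL L (u ++ (v ++ y) ++ z) u := simL_trans (simL_symm ha) hz
      exact core L hrec u v y x z hv h (simL_symm hR) hS.symm hz' hM
  · rintro ⟨h0, hR, hper⟩
    refine ⟨hR, ?_⟩
    ext s
    rw [mem_sfl_iff, mem_sfl_iff]
    have hxne : (v ++ x) ++ s ≠ [] := append_ne_nil_left (append_ne_nil_left hv x) s
    have hyne : (v ++ y) ++ s ≠ [] := append_ne_nil_left (append_ne_nil_left hv y) s
    have ha : ∀ w : ℕ → A, True := fun _ => trivial
    constructor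
    · intro hA
      rw [notBot_iff L u _ hxne] at hA
      obtain ⟨w, hw1, hw2⟩ := hA
      -- hw1 : SimL L (u ++ ((v++x)++s) ++ w) u
      have e1 : (u ++ (v ++ x)) ++ (s ++ w) = (u ++ ((v ++ x) ++ s)) ++ w := by
        simp [List.append_assoc]
      have hcond : SimL L (u ++ (v ++ x) ++ (s ++ w)) u := by
        rw [show u ++ (v ++ x) ++ (s ++ w) = u ++ ((v ++ x) ++ s) ++ w from by
          simp [List.append_assoc]]
        exact hw1
      have hiff := hper (s ++ w) hcond
      have hmem : upW u ((v ++ y) ++ (s ++ w)) ∈ L := by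
        refine hiff.1 ?_
        rw [show (v ++ x) ++ (s ++ w) = ((v ++ x) ++ s) ++ w from by
          simp [List.append_assoc]]
        exact hw2
      rw [notBot_iff L u _ hyne]
      refine ⟨w, ?_, ?_⟩
      · have hsa := simL_append hR (s ++ w)
        have hby : SimL L (u ++ (v ++ y) ++ (s ++ w)) u := simL_trans (simL_symm hsa) hcond
        rw [show u ++ ((v ++ y) ++ s) ++ w = u ++ (v ++ y) ++ (s ++ w) from by
          simp [List.append_assoc]]
        exact hby
      · rw [show ((v ++ y) ++ s) ++ w = (v ++ y) ++ (s ++ w) from by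
          simp [List.append_assoc]]
        exact hmem
    · intro hB
      rw [notBot_iff L u _ hyne] at hB
      obtain ⟨w, hw1, hw2⟩ := hB
      have hby : SimL L (u ++ (v ++ y) ++ (s ++ w)) u := by
        rw [show u ++ (v ++ y) ++ (s ++ w) = u ++ ((v ++ y) ++ s) ++ w from by
          simp [List.append_assoc]]
        exact hw1
      have hsa := simL_append hR (s ++ w)
      have hcond : SimL L (u ++ (v ++ x) ++ (s ++ w)) u := simL_trans hsa hby
      have hiff := hper (s ++ w) hcond
      have hmem : upW u ((v ++ x) ++ (s ++ w)) ∈ L := by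
        refine hiff.2 ?_
        rw [show (v ++ y) ++ (s ++ w) = ((v ++ y) ++ s) ++ w from by
          simp [List.append_assoc]]
        exact hw2
      rw [notBot_iff L u _ hxne]
      refine ⟨w, ?_, ?_⟩
      · rw [show u ++ ((v ++ x) ++ s) ++ w = u ++ (v ++ x) ++ (s ++ w) from by
          simp [List.append_assoc]]
        exact hcond
      · rw [show ((v ++ x) ++ s) ++ w = (v ++ x) ++ (s ++ w) from by
          simp [List.append_assoc]]
        exact hmem

/-- for pointed `(u,v)` with `v ≠ ε`:
`(u,vx) ≡_L (u,vy)` iff `(u,vx) ≈_L (u,vy)`. -/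
theorem stmt14 {A : Type} [Nonempty A] [Fintype A] (L : Set (ℕ → A))
    (hrec : DCWRecognizable L)
    (u v : List A) (h : IsPointed L u v) (hv : v ≠ []) (x y : List A) :
    EquivL L u (v ++ x) u (v ++ y) ↔ ApproxL L u (v ++ x) u (v ++ y) :=
  stmt14' L hrec u v h hv x y
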